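/- Let T be a finite tree with positive edge weights w and connection latency ρ > 0 under the postal model, where the broadcast time b_time(u, G) of a vertex u in a subtree G is the minimum time for u to originate a message and have it reach all vertices of G, given that a sender takes ρ time units to connect to each successive receiver (the k-th neighbor it contacts receives the message at time k·ρ + w(edge) + (time that neighbor then needs for its own subtree)). If (u,v) is an edge of T and b_time(u, B(u,v)) ≤ b_time(v, B(v,u)), where B(x,y) denotes the component of T − (edge x y) containing x together with x (i.e., T minus the open branch at x containing y), then b_time(u, T) = ρ + w(u,v) + b_time(v, B(v,u)). -/

import Mathlib

/-!
Common definitions for the postal-model broadcasting problem on weighted trees.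
-/

open SimpleGraph

namespace Postal

attribute [local instance] Classical.propDecidable

variable {V : Type*} [Fintype V] [DecidableEq V] (G : SimpleGraph V)

/-- The unique path (as a walk) between two vertices of a tree. -/
noncomputable def tPath (hG : G.IsTree) (u v : V) : G.Walk u v :=
  (hG.existsUnique_path u v).exists.choose

/-- `z` lies in the open branch `O(x,y)`: the component of `T - x` containing `y`. -/
def inO (x y z : V) : Prop := ∃ p : G.Walk y z, x ∉ p.support

/-- The open branch `O(x,y)`. -/
def Obr (x y : V) : Set V := {z | inO G x y z}

/-- The closed branch `B(x,y) = T - O(x,y)` (it contains `x`). -/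
def Bbr (x y : V) : Set V := {z | ¬ inO G x y z}

/-- The parent of `z` with respect to the root `u`: the penultimate vertex on the
unique `u`-to-`z` path. -/
noncomputable def parent (hG : G.IsTree) (u z : V) : V :=
  (tPath G hG u z).getVert ((tPath G hG u z).length - 1)

/-- The receive time of `z` under schedule `σ` when `u` originates the message:
along the unique `u`-to-`z` path, each vertex is contacted in its slot `σ`,
contributing `σ·ρ` connection time plus the edge weight. -/
noncomputable def recvTime (hG : G.IsTree) (w : V → V → ℝ) (ρ : ℝ) (σ : V → ℕ) (u z : V) : ℝ :=
  ((tPath G hG u z).darts.map (fun d => (σ d.toProd.2 : ℝ) * ρ + w d.toProd.1 d.toProd.2)).sum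

/-- A schedule `σ` is valid for source `u` broadcasting over the vertex set `S`:
every non-source vertex gets a slot `≥ 1`, and distinct vertices with the same
parent get distinct slots (a sender contacts its neighbors sequentially). -/
def Valid (hG : G.IsTree) (σ : V → ℕ) (u : V) (S : Set V) : Prop :=
  (∀ z ∈ S, z ≠ u → 1 ≤ σ z) ∧
  (∀ z₁ ∈ S, ∀ z₂ ∈ S, z₁ ≠ u → z₂ ≠ u → z₁ ≠ z₂ →
    parent G hG u z₁ = parent G hG u z₂ → σ z₁ ≠ σ z₂)

/-- The minimum broadcast time for `u` to broadcast a message over the subtree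
induced by `S` under the postal model with latency `ρ`. -/
noncomputable def bTime (hG : G.IsTree) (w : V → V → ℝ) (ρ : ℝ) (u : V) (S : Set V) : ℝ :=
  sInf {m | ∃ σ, Valid G hG σ u S ∧ m = sSup ((recvTime G hG w ρ σ u) '' S)}

/-- Broadcast time over the whole tree. -/
noncomputable def bTimeT (hG : G.IsTree) (w : V → V → ℝ) (ρ : ℝ) (u : V) : ℝ :=
  bTime G hG w ρ u Set.univ

/-- The set of broadcast centers. -/
def BCtr (hG : G.IsTree) (w : V → V → ℝ) (ρ : ℝ) : Set V :=
  {u | ∀ v, bTimeT G hG w ρ u ≤ bTimeT G hG w ρ v}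

/-- A prime broadcast center. -/
def IsPrime (hG : G.IsTree) (w : V → V → ℝ) (ρ : ℝ) (κ : V) : Prop :=
  κ ∈ BCtr G hG w ρ ∧
  ∀ u, G.Adj κ u → bTime G hG w ρ u (Bbr G u κ) ≤ bTime G hG w ρ κ (Bbr G κ u)

/-- Hop distance: number of edges on the unique path. -/
noncomputable def hop (hG : G.IsTree) (x y : V) : ℕ := (tPath G hG x y).length

/-- Total weight of the unique `x`-to-`y` path. -/
noncomputable def pw (hG : G.IsTree) (w : V → V → ℝ) (x y : V) : ℝ :=
  ((tPath G hG x y).darts.map (fun d => w d.toProd.1 d.toProd.2)).sum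

/-- Symmetric weight function. -/
def Wsymm (w : V → V → ℝ) : Prop := ∀ a b, w a b = w b a

/-- Positive weights on edges. -/
def Wpos (w : V → V → ℝ) : Prop := ∀ a b, G.Adj a b → 0 < w a b

/-- A scenario: a symmetric weight assignment within the uncertainty intervals. -/
def Scenario (lo hi : V → V → ℝ) (w : V → V → ℝ) : Prop :=
  (∀ a b, w a b = w b a) ∧ ∀ a b, G.Adj a b → lo a b ≤ w a b ∧ w a b ≤ hi a b

/-- The maximum regret of `x`. -/
noncomputable def maxRegret (hG : G.IsTree) (lo hi : V → V → ℝ) (ρ : ℝ) (x : V) : ℝ :=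
  sSup {r | ∃ w y, Scenario G lo hi w ∧ r = bTimeT G hG w ρ x - bTimeT G hG w ρ y}

/-- `w` is a worst-case scenario of the tree with respect to `x`. -/
def WorstCase (hG : G.IsTree) (lo hi : V → V → ℝ) (ρ : ℝ) (x : V) (w : V → V → ℝ) : Prop :=
  Scenario G lo hi w ∧
  ∃ y, bTimeT G hG w ρ x - bTimeT G hG w ρ y = maxRegret G hG lo hi ρ x

/-- An edge `(a,b)` lies on the unique `x`-to-`y` path. -/
def onPath (hG : G.IsTree) (x y a b : V) : Prop :=
  a ∈ (tPath G hG x y).support ∧ b ∈ (tPath G hG x y).support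

/-- The base scenario `α_{x,y}`: weight `hi` on the `x`-to-`y` path and on edges of
`B(y,x)`, weight `lo` elsewhere. -/
noncomputable def baseScenario (hG : G.IsTree) (lo hi : V → V → ℝ) (x y : V) : V → V → ℝ :=
  fun a b =>
    if onPath G hG x y a b ∨ (a ∈ Bbr G y x ∧ b ∈ Bbr G y x) then hi a b else lo a b

/-- The value `w(y,v) + b_time(v, B(v,y))` of a neighbor `v` of `y`. -/
noncomputable def nval (hG : G.IsTree) (w : V → V → ℝ) (ρ : ℝ) (y v : V) : ℝ :=
  w y v + bTime G hG w ρ v (Bbr G v y)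

/-- Scenario `β^j_{x,y}`: agrees with `α_{x,y}`, except that every edge in
`{(y,u_k)} ∪ E(B(u_k,y))` for `k > j` (with `u` the 1-based sorted enumeration
of the neighbors of `y` in `B(y,x)`) gets weight `lo`. -/
noncomputable def betaScenario (hG : G.IsTree) (lo hi : V → V → ℝ) (x y : V) {h : ℕ}
    (u : Fin h → V) (j : ℕ) : V → V → ℝ :=
  fun a b =>
    if ∃ k : Fin h, j < (k : ℕ) + 1 ∧
        ((a = y ∧ b = u k) ∨ (b = y ∧ a = u k) ∨
          (a ∈ Bbr G (u k) y ∧ b ∈ Bbr G (u k) y)) then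
      lo a b
    else baseScenario G hG lo hi x y a b

/-- Scenario `γ^j_{x,y}`: agrees with `α_{x,y}` on the edges in
`⋃_{1 ≤ k ≤ j} ({(y,u_k)} ∪ E(B(u_k,y)))` and with the scenario `s` elsewhere. -/
noncomputable def gammaScenario (hG : G.IsTree) (lo hi : V → V → ℝ) (s : V → V → ℝ)
    (x y : V) {h : ℕ} (u : Fin h → V) (j : ℕ) : V → V → ℝ :=
  fun a b =>
    if ∃ k : Fin h, (k : ℕ) + 1 ≤ j ∧
        ((a = y ∧ b = u k) ∨ (b = y ∧ a = u k) ∨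
          (a ∈ Bbr G (u k) y ∧ b ∈ Bbr G (u k) y)) then
      baseScenario G hG lo hi x y a b
    else s a b

/-- The set of neighbors of `y` inside the branch `B(y,x)`. -/
def nbrIn (x y : V) : Set V := {v | G.Adj y v ∧ v ∈ Bbr G y x}



/-! ### Auxiliary lemmas for `stmt0` -/

section Aux

set_option linter.unusedSectionVars false

variable {V : Type*} [Fintype V] [DecidableEq V] {G : SimpleGraph V}

lemma tPath_isPath (hG : G.IsTree) (u v : V) : (tPath G hG u v).IsPath :=
  (hG.existsUnique_path u v).exists.choose_spec

lemma tPath_eq (hG : G.IsTree) {u v : V} {p : G.Walk u v} (hp : p.IsPath) :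
    tPath G hG u v = p :=
  ((hG.existsUnique_path u v).unique (tPath_isPath hG u v) hp)

lemma tPath_nil (hG : G.IsTree) (u : V) : tPath G hG u u = SimpleGraph.Walk.nil :=
  tPath_eq hG SimpleGraph.Walk.IsPath.nil

lemma inO_iff (hG : G.IsTree) {x y z : V} :
    inO G x y z ↔ x ∉ (tPath G hG y z).support := by
  constructor
  · rintro ⟨p, hp⟩ h
    have he : tPath G hG y z = (p.toPath : G.Walk y z) := tPath_eq hG p.toPath.2
    rw [he] at h
    exact hp (SimpleGraph.Walk.support_toPath_subset p h)
  · exact fun h => ⟨_, h⟩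

lemma tot (hG : G.IsTree) {a b z : V} (hab : a ≠ b) (h : ¬ inO G a b z) :
    inO G b a z := by
  have ha : a ∈ (tPath G hG b z).support := by
    by_contra hc
    exact h ((inO_iff hG).2 hc)
  refine ⟨(tPath G hG b z).dropUntil a ha, fun hb => ?_⟩
  have hnd := (tPath_isPath hG b z).support_nodup
  have hspec := (tPath G hG b z).take_spec ha
  rw [← hspec, SimpleGraph.Walk.support_append, List.nodup_append] at hnd
  have hb' : b ∈ ((tPath G hG b z).dropUntil a ha).support.tail := by
    rw [SimpleGraph.Walk.support_eq_cons, List.mem_cons] at hb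
    rcases hb with hb | hb
    · exact absurd hb hab.symm
    · exact hb
  exact hnd.2.2 _ (SimpleGraph.Walk.start_mem_support _) _ hb' rfl

lemma excl (hG : G.IsTree) {a b z : V} (hab : G.Adj a b)
    (h1 : inO G a b z) : ¬ inO G b a z := by
  intro h2
  rw [inO_iff hG] at h1 h2
  have hp : (SimpleGraph.Walk.cons hab (tPath G hG b z)).IsPath :=
    (SimpleGraph.Walk.cons_isPath_iff _ _).2 ⟨tPath_isPath hG b z, h1⟩
  have he := tPath_eq hG hp
  apply h2
  rw [he, SimpleGraph.Walk.support_cons]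
  exact List.mem_cons_of_mem _ (SimpleGraph.Walk.start_mem_support _)

lemma mem_Bbr_compl (hG : G.IsTree) {u v : V} (huv : G.Adj u v) (z : V) :
    z ∈ Bbr G u v ↔ z ∉ Bbr G v u := by
  constructor
  · intro h hc
    exact hc (tot hG huv.ne h)
  · intro h
    have hz : inO G v u z := not_not.1 h
    exact excl hG huv.symm hz

lemma self_mem_Bbr (x y : V) : x ∈ Bbr G x y := by
  rintro ⟨p, hp⟩
  exact hp (SimpleGraph.Walk.end_mem_support p)

lemma not_mem_Bbr (hvu : v ≠ u) : u ∉ Bbr G v u := by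
  intro h
  exact h ⟨SimpleGraph.Walk.nil, by simp [hvu]⟩

lemma u_notin_tPath (hG : G.IsTree) {u v z : V} (huv : G.Adj u v)
    (hz : z ∈ Bbr G v u) : u ∉ (tPath G hG v z).support :=
  (inO_iff hG).1 (tot hG huv.ne' hz)

lemma tPath_decomp (hG : G.IsTree) {u v z : V} (huv : G.Adj u v)
    (hz : z ∈ Bbr G v u) :
    tPath G hG u z = SimpleGraph.Walk.cons huv (tPath G hG v z) :=
  tPath_eq hG ((SimpleGraph.Walk.cons_isPath_iff _ _).2
    ⟨tPath_isPath hG v z, u_notin_tPath hG huv hz⟩)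

lemma support_subset_Bbr (hG : G.IsTree) {u v z : V} (huv : G.Adj u v)
    (hz : z ∈ Bbr G v u) :
    ∀ x ∈ (tPath G hG v z).support, x ∈ Bbr G v u := by
  intro x hx
  by_contra hxB
  have h1 : inO G v u x := not_not.1 hxB
  have h2 : inO G u v x :=
    ⟨(tPath G hG v z).takeUntil x hx,
      fun hu => u_notin_tPath hG huv hz
        (SimpleGraph.Walk.support_takeUntil_subset _ hx hu)⟩
  exact excl hG huv.symm h1 h2

lemma parent_eq (hG : G.IsTree) {u v z : V} (huv : G.Adj u v)
    (hz : z ∈ Bbr G v u) (hzv : z ≠ v) :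
    parent G hG u z = parent G hG v z := by
  unfold parent
  rw [tPath_decomp hG huv hz]
  have hlen : (tPath G hG v z).length ≠ 0 := fun h =>
    hzv (SimpleGraph.Walk.eq_of_length_eq_zero h).symm
  obtain ⟨m, hm⟩ := Nat.exists_eq_succ_of_ne_zero hlen
  rw [SimpleGraph.Walk.length_cons, hm]
  simp [SimpleGraph.Walk.getVert_cons_succ]

lemma parent_uv (hG : G.IsTree) {u v : V} (huv : G.Adj u v) :
    parent G hG u v = u := by
  have he : tPath G hG u v = SimpleGraph.Walk.cons huv SimpleGraph.Walk.nil :=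
    tPath_eq hG (by simp [SimpleGraph.Walk.cons_isPath_iff, huv.ne])
  unfold parent
  rw [he]
  simp

lemma parent_mem_support (hG : G.IsTree) (u z : V) :
    parent G hG u z ∈ (tPath G hG u z).support :=
  SimpleGraph.Walk.mem_support_iff_exists_getVert.2 ⟨_, rfl, Nat.sub_le _ _⟩

lemma recvTime_self (hG : G.IsTree) (w : V → V → ℝ) (ρ : ℝ) (σ : V → ℕ) (u : V) :
    recvTime G hG w ρ σ u u = 0 := by
  unfold recvTime
  rw [tPath_nil hG]
  simp

lemma recvTime_decomp (hG : G.IsTree) (w : V → V → ℝ) (ρ : ℝ) (σ : V → ℕ)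
    {u v z : V} (huv : G.Adj u v) (hz : z ∈ Bbr G v u) :
    recvTime G hG w ρ σ u z = (σ v : ℝ) * ρ + w u v + recvTime G hG w ρ σ v z := by
  unfold recvTime
  rw [tPath_decomp hG huv hz]
  simp [SimpleGraph.Walk.darts_cons]

lemma recvTime_congr (hG : G.IsTree) (w : V → V → ℝ) (ρ : ℝ) {σ σ' : V → ℕ}
    {u z : V} (h : ∀ x ∈ (tPath G hG u z).support.tail, σ x = σ' x) :
    recvTime G hG w ρ σ u z = recvTime G hG w ρ σ' u z := by
  unfold recvTime
  congr 1
  apply List.map_congr_left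
  intro d hd
  have hmem : d.toProd.2 ∈ (tPath G hG u z).support.tail := by
    rw [← SimpleGraph.Walk.map_snd_darts]
    exact List.mem_map_of_mem hd
  rw [h _ hmem]

lemma list_sum_map_add {α : Type*} (l : List α) (F H : α → ℝ) :
    (l.map fun d => F d + H d).sum = (l.map F).sum + (l.map H).sum := by
  induction l with
  | nil => simp
  | cons a l ih => simp [ih]; ring

lemma ind_sum_le_one (u : V) (L : List V) (h : L.Nodup) :
    (L.map fun x => if x = u then (1 : ℝ) else 0).sum ≤ 1 := by
  induction L with
  | nil => simp
  | cons a L ih =>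
    rw [List.nodup_cons] at h
    by_cases hau : a = u
    · subst hau
      have hz : ((L.map fun x => if x = a then (1 : ℝ) else 0)).sum = 0 := by
        apply List.sum_eq_zero
        intro x hx
        obtain ⟨y, hy, rfl⟩ := List.mem_map.1 hx
        have : y ≠ a := fun hya => h.1 (hya ▸ hy)
        simp [this]
      simp [hz]
    · simp only [List.map_cons, List.sum_cons, if_neg hau, zero_add]
      exact ih h.2

lemma parent_of_dart_aux (hG : G.IsTree) {a z : V} (p : G.Walk a z) (hp : p.IsPath) :
    ∀ d ∈ p.darts, ∃ q : G.Walk a d.toProd.2, q.IsPath ∧ 1 ≤ q.length ∧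
      q.support ⊆ p.support ∧ q.getVert (q.length - 1) = d.toProd.1 := by
  induction p with
  | nil => intro d hd; simp at hd
  | @cons a b z h p ih =>
    intro d hd
    rw [SimpleGraph.Walk.darts_cons, List.mem_cons] at hd
    rcases hd with rfl | hd
    · refine ⟨SimpleGraph.Walk.cons h SimpleGraph.Walk.nil, ?_, ?_, ?_, ?_⟩
      · simp [SimpleGraph.Walk.cons_isPath_iff, h.ne]
      · simp
      · intro x hx
        simp only [SimpleGraph.Walk.support_cons, SimpleGraph.Walk.support_nil,
          List.mem_cons, List.mem_singleton, List.not_mem_nil, or_false] at hx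
        rw [SimpleGraph.Walk.support_cons]
        rcases hx with rfl | rfl
        · exact List.mem_cons_self
        · exact List.mem_cons_of_mem _ (SimpleGraph.Walk.start_mem_support _)
      · simp
    · rw [SimpleGraph.Walk.cons_isPath_iff] at hp
      obtain ⟨q, hq, hq1, hqs, hqv⟩ := ih hp.1 d hd
      refine ⟨SimpleGraph.Walk.cons h q, ?_, ?_, ?_, ?_⟩
      · exact (SimpleGraph.Walk.cons_isPath_iff _ _).2 ⟨hq, fun ha => hp.2 (hqs ha)⟩
      · simp
      · intro x hx
        rw [SimpleGraph.Walk.support_cons, List.mem_cons] at hx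
        rw [SimpleGraph.Walk.support_cons, List.mem_cons]
        rcases hx with hx | hx
        · exact Or.inl hx
        · exact Or.inr (hqs hx)
      · obtain ⟨m, hm⟩ := Nat.exists_eq_succ_of_ne_zero (Nat.one_le_iff_ne_zero.1 hq1)
        have hqv' : q.getVert m = d.toProd.1 := by
          have h' := hqv
          rw [hm] at h'
          simpa using h'
        rw [SimpleGraph.Walk.length_cons, hm]
        simpa [SimpleGraph.Walk.getVert_cons_succ] using hqv'

lemma parent_of_dart (hG : G.IsTree) {u z : V} {d : G.Dart}
    (hd : d ∈ (tPath G hG u z).darts) :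
    parent G hG u d.toProd.2 = d.toProd.1 := by
  obtain ⟨q, hq, hq1, _, hqv⟩ :=
    parent_of_dart_aux hG (tPath G hG u z) (tPath_isPath hG u z) d hd
  unfold parent
  rw [tPath_eq hG hq]
  exact hqv

end Aux

/-- If `(u,v)` is an edge of `T` and
`b_time(u, B(u,v)) ≤ b_time(v, B(v,u))`, then
`b_time(u, T) = ρ + w(u,v) + b_time(v, B(v,u))`. -/
theorem stmt0 {V : Type*} [Fintype V] [DecidableEq V] (G : SimpleGraph V) (hG : G.IsTree)
    (w : V → V → ℝ) (hsym : Wsymm w) (hpos : Wpos G w) (ρ : ℝ) (hρ : 0 < ρ)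
    (u v : V) (huv : G.Adj u v)
    (hle : bTime G hG w ρ u (Bbr G u v) ≤ bTime G hG w ρ v (Bbr G v u)) :
    bTimeT G hG w ρ u = ρ + w u v + bTime G hG w ρ v (Bbr G v u) := by
  classical
  have hcompl : ∀ z : V, z ∈ Bbr G u v ↔ z ∉ Bbr G v u := mem_Bbr_compl hG huv
  have hvB : v ∈ Bbr G v u := self_mem_Bbr v u
  have huB : u ∈ Bbr G u v := self_mem_Bbr u v
  have huNB : u ∉ Bbr G v u := not_mem_Bbr huv.ne'
  have hw0 : 0 < w u v := hpos u v huv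
  -- a default valid schedule
  have hσ0valid : ∀ (s : V) (S : Set V),
      Valid G hG (fun z => (Fintype.equivFin V z : ℕ) + 1) s S := by
    intro s S
    constructor
    · intro z _ _; exact Nat.le_add_left 1 _
    · intro z₁ _ z₂ _ _ _ h12 _ heq
      apply h12
      have heq' : ((Fintype.equivFin V) z₁ : ℕ) + 1 = ((Fintype.equivFin V) z₂ : ℕ) + 1 := heq
      exact (Fintype.equivFin V).injective (Fin.val_injective (by omega))
  have hbne : ∀ (s : V) (S : Set V),
      {m | ∃ σ, Valid G hG σ s S ∧
        m = sSup ((recvTime G hG w ρ σ s) '' S)}.Nonempty :=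
    fun s S => ⟨_, _, hσ0valid s S, rfl⟩
  have hbdd : ∀ (s : V) (S : Set V), s ∈ S → ∀ m ∈ {m | ∃ σ, Valid G hG σ s S ∧
      m = sSup ((recvTime G hG w ρ σ s) '' S)}, (0:ℝ) ≤ m := by
    rintro s S hs m ⟨σm, hσm, rfl⟩
    calc (0:ℝ) = recvTime G hG w ρ σm s s := (recvTime_self hG w ρ σm s).symm
      _ ≤ sSup ((recvTime G hG w ρ σm s) '' S) :=
          le_csSup ((S.toFinite.image _).bddAbove) (Set.mem_image_of_mem _ hs)
  have ht0 : 0 ≤ bTime G hG w ρ v (Bbr G v u) :=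
    le_csInf (hbne v (Bbr G v u)) (hbdd v _ hvB)
  -- lower bound
  have lower : ρ + w u v + bTime G hG w ρ v (Bbr G v u) ≤ bTimeT G hG w ρ u := by
    apply le_csInf (hbne u Set.univ)
    rintro m ⟨σ, hσ, rfl⟩
    have hval2 : Valid G hG σ v (Bbr G v u) := by
      constructor
      · intro z hz _
        exact hσ.1 z (Set.mem_univ z) (fun h => huNB (h ▸ hz))
      · intro z₁ h1 z₂ h2 h1v h2v h12 hpar
        refine hσ.2 z₁ (Set.mem_univ _) z₂ (Set.mem_univ _)
          (fun h => huNB (h ▸ h1)) (fun h => huNB (h ▸ h2)) h12 ?_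
        rw [parent_eq hG huv h1 h1v, parent_eq hG huv h2 h2v]; exact hpar
    have htle : bTime G hG w ρ v (Bbr G v u) ≤
        sSup ((recvTime G hG w ρ σ v) '' Bbr G v u) :=
      csInf_le ⟨0, hbdd v _ hvB⟩ ⟨σ, hval2, rfl⟩
    have hne' : ((recvTime G hG w ρ σ v) '' Bbr G v u).Nonempty := ⟨_, v, hvB, rfl⟩
    obtain ⟨z₀, hz₀, hz₀eq⟩ := hne'.csSup_mem (Set.toFinite _)
    have hdec := recvTime_decomp hG w ρ σ huv hz₀
    have hσv : (1:ℝ) ≤ (σ v : ℝ) := by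
      exact_mod_cast hσ.1 v (Set.mem_univ v) huv.ne'
    have hmul : ρ ≤ (σ v : ℝ) * ρ := by nlinarith
    have hstep : bTime G hG w ρ v (Bbr G v u) ≤ recvTime G hG w ρ σ v z₀ :=
      hz₀eq ▸ htle
    calc ρ + w u v + bTime G hG w ρ v (Bbr G v u)
        ≤ (σ v : ℝ) * ρ + w u v + recvTime G hG w ρ σ v z₀ := by linarith
      _ = recvTime G hG w ρ σ u z₀ := hdec.symm
      _ ≤ sSup ((recvTime G hG w ρ σ u) '' Set.univ) :=
          le_csSup ((Set.finite_univ.image _).bddAbove) ⟨z₀, Set.mem_univ _, rfl⟩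
  -- upper bound
  have upper : ∀ ε : ℝ, 0 < ε →
      bTimeT G hG w ρ u ≤ ρ + w u v + bTime G hG w ρ v (Bbr G v u) + ε := by
    intro ε hε
    obtain ⟨m₂, ⟨σ₂, hσ₂, hm₂⟩, hm₂lt⟩ := Real.lt_sInf_add_pos (hbne v (Bbr G v u)) hε
    obtain ⟨m₁, ⟨σ₁, hσ₁, hm₁⟩, hm₁lt⟩ := Real.lt_sInf_add_pos (hbne u (Bbr G u v)) hε
    have hM₂ : sSup ((recvTime G hG w ρ σ₂ v) '' Bbr G v u) ≤
        bTime G hG w ρ v (Bbr G v u) + ε := by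
      rw [← hm₂]; exact hm₂lt.le
    have hM₁ : sSup ((recvTime G hG w ρ σ₁ u) '' Bbr G u v) ≤
        bTime G hG w ρ u (Bbr G u v) + ε := by
      rw [← hm₁]; exact hm₁lt.le
    set σ : V → ℕ := fun z => if z ∈ Bbr G v u then (if z = v then 1 else σ₂ z)
      else σ₁ z + (if parent G hG u z = u then 1 else 0) with hσdef
    have hσv1 : σ v = 1 := by simp only [hσdef]; simp [hvB]
    have hσBvu : ∀ z ∈ Bbr G v u, z ≠ v → σ z = σ₂ z := by
      intro z hz hzv; simp only [hσdef]; simp [hz, hzv]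
    have hσBuv : ∀ z, z ∉ Bbr G v u →
        σ z = σ₁ z + (if parent G hG u z = u then 1 else 0) := by
      intro z hz; simp only [hσdef]; simp [hz]
    have hvalid : Valid G hG σ u Set.univ := by
      constructor
      · intro z _ hzu
        by_cases hz : z ∈ Bbr G v u
        · by_cases hzv : z = v
          · subst hzv; rw [hσv1]
          · rw [hσBvu z hz hzv]; exact hσ₂.1 z hz hzv
        · rw [hσBuv z hz]
          exact le_trans (hσ₁.1 z ((hcompl z).2 hz) hzu) (Nat.le_add_right _ _)
      · intro z₁ _ z₂ _ h1u h2u h12 hpar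
        by_cases h1 : z₁ ∈ Bbr G v u <;> by_cases h2 : z₂ ∈ Bbr G v u
        · by_cases e1 : z₁ = v <;> by_cases e2 : z₂ = v
          · exact absurd (e1.trans e2.symm) h12
          · exfalso
            rw [e1, parent_uv hG huv, parent_eq hG huv h2 e2] at hpar
            have hm : parent G hG v z₂ ∈ Bbr G v u :=
              support_subset_Bbr hG huv h2 _ (parent_mem_support hG v z₂)
            rw [← hpar] at hm
            exact huNB hm
          · exfalso
            rw [e2, parent_uv hG huv, parent_eq hG huv h1 e1] at hpar
            have hm : parent G hG v z₁ ∈ Bbr G v u :=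
              support_subset_Bbr hG huv h1 _ (parent_mem_support hG v z₁)
            rw [hpar] at hm
            exact huNB hm
          · rw [hσBvu z₁ h1 e1, hσBvu z₂ h2 e2]
            apply hσ₂.2 z₁ h1 z₂ h2 e1 e2 h12
            rw [← parent_eq hG huv h1 e1, ← parent_eq hG huv h2 e2]; exact hpar
        · by_cases e1 : z₁ = v
          · rw [e1] at hpar ⊢
            rw [parent_uv hG huv] at hpar
            have h2B : z₂ ∈ Bbr G u v := (hcompl z₂).2 h2
            have hs2 : σ z₂ = σ₁ z₂ + 1 := by
              rw [hσBuv z₂ h2, ← hpar, if_pos rfl]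
            have h1le : 1 ≤ σ₁ z₂ := hσ₁.1 z₂ h2B h2u
            rw [hσv1, hs2]; omega
          · exfalso
            have hp1 : parent G hG u z₁ ∈ Bbr G v u := by
              rw [parent_eq hG huv h1 e1]
              exact support_subset_Bbr hG huv h1 _ (parent_mem_support hG v z₁)
            have hp2 : parent G hG u z₂ ∈ Bbr G u v :=
              support_subset_Bbr hG huv.symm ((hcompl z₂).2 h2) _
                (parent_mem_support hG u z₂)
            rw [hpar] at hp1
            exact (hcompl _).1 hp2 hp1
        · by_cases e2 : z₂ = v
          · rw [e2] at hpar ⊢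
            rw [parent_uv hG huv] at hpar
            have h1B : z₁ ∈ Bbr G u v := (hcompl z₁).2 h1
            have hs1 : σ z₁ = σ₁ z₁ + 1 := by
              rw [hσBuv z₁ h1, hpar, if_pos rfl]
            have h1le : 1 ≤ σ₁ z₁ := hσ₁.1 z₁ h1B h1u
            rw [hσv1, hs1]; omega
          · exfalso
            have hp2 : parent G hG u z₂ ∈ Bbr G v u := by
              rw [parent_eq hG huv h2 e2]
              exact support_subset_Bbr hG huv h2 _ (parent_mem_support hG v z₂)
            have hp1 : parent G hG u z₁ ∈ Bbr G u v :=
              support_subset_Bbr hG huv.symm ((hcompl z₁).2 h1) _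
                (parent_mem_support hG u z₁)
            rw [← hpar] at hp2
            exact (hcompl _).1 hp1 hp2
        · have h1B : z₁ ∈ Bbr G u v := (hcompl z₁).2 h1
          have h2B : z₂ ∈ Bbr G u v := (hcompl z₂).2 h2
          have hne' := hσ₁.2 z₁ h1B z₂ h2B h1u h2u h12 hpar
          rw [hσBuv z₁ h1, hσBuv z₂ h2, hpar]
          by_cases hc : parent G hG u z₂ = u <;> simp [hc] <;> omega
    -- pointwise bound on receive times
    have key : ∀ z : V, recvTime G hG w ρ σ u z ≤
        ρ + w u v + bTime G hG w ρ v (Bbr G v u) + ε := by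
      intro z
      by_cases hz : z ∈ Bbr G v u
      · rw [recvTime_decomp hG w ρ σ huv hz, hσv1]
        have hcong : recvTime G hG w ρ σ v z = recvTime G hG w ρ σ₂ v z := by
          apply recvTime_congr hG
          intro x hx
          have hxs : x ∈ (tPath G hG v z).support := List.tail_subset _ hx
          have hxB : x ∈ Bbr G v u := support_subset_Bbr hG huv hz x hxs
          have hxv : x ≠ v := by
            have hnd := (tPath_isPath hG v z).support_nodup
            rw [SimpleGraph.Walk.support_eq_cons, List.nodup_cons] at hnd
            exact fun h => hnd.1 (h ▸ hx)
          exact hσBvu x hxB hxv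
        have hle2 : recvTime G hG w ρ σ₂ v z ≤ bTime G hG w ρ v (Bbr G v u) + ε :=
          le_trans (le_csSup (((Bbr G v u).toFinite.image _).bddAbove) ⟨z, hz, rfl⟩) hM₂
        rw [hcong]
        push_cast
        linarith
      · have hzB : z ∈ Bbr G u v := (hcompl z).2 hz
        have hsupB := support_subset_Bbr hG huv.symm hzB
        have hterm : ∀ d ∈ (tPath G hG u z).darts,
            ((σ d.toProd.2 : ℝ) * ρ + w d.toProd.1 d.toProd.2) =
            (((σ₁ d.toProd.2 : ℝ) * ρ + w d.toProd.1 d.toProd.2) +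
              (if d.toProd.1 = u then ρ else 0)) := by
          intro d hd
          have hd2 : d.toProd.2 ∈ (tPath G hG u z).support :=
            SimpleGraph.Walk.dart_snd_mem_support_of_mem_darts _ hd
          have hd2n : d.toProd.2 ∉ Bbr G v u := (hcompl _).1 (hsupB _ hd2)
          rw [hσBuv _ hd2n, parent_of_dart hG hd]
          by_cases hdu : d.toProd.1 = u <;> simp [hdu] <;> push_cast <;> ring
        have hsum : recvTime G hG w ρ σ u z =
            recvTime G hG w ρ σ₁ u z +
            ((tPath G hG u z).darts.map
              (fun d => if d.toProd.1 = u then ρ else 0)).sum := by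
          unfold recvTime
          rw [List.map_congr_left hterm, list_sum_map_add]
        have hind : ((tPath G hG u z).darts.map
            (fun d => if d.toProd.1 = u then ρ else 0)).sum ≤ ρ := by
          have h1 : ((tPath G hG u z).darts.map
              (fun d => if d.toProd.1 = u then ρ else 0)) =
              ((tPath G hG u z).darts.map
                (fun d => ρ * (if d.toProd.1 = u then (1:ℝ) else 0))) := by
            apply List.map_congr_left
            intro d _
            by_cases h : d.toProd.1 = u <;> simp [h]
          rw [h1, List.sum_map_mul_left]
          have h2 : ((tPath G hG u z).darts.map
              (fun d => if d.toProd.1 = u then (1:ℝ) else 0)) =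
              (((tPath G hG u z).darts.map (fun d => d.toProd.1)).map
                (fun x => if x = u then (1:ℝ) else 0)) := by
            rw [List.map_map]; rfl
          have hnd : ((tPath G hG u z).darts.map fun d => d.toProd.1).Nodup := by
            have hfst := SimpleGraph.Walk.map_fst_darts (tPath G hG u z)
            have heq : ((tPath G hG u z).darts.map fun d => d.toProd.1) =
                (tPath G hG u z).support.dropLast := hfst
            rw [heq]
            exact (List.dropLast_sublist _).nodup (tPath_isPath hG u z).support_nodup
          rw [h2]
          have := ind_sum_le_one u _ hnd
          nlinarith
        have hr1 : recvTime G hG w ρ σ₁ u z ≤ bTime G hG w ρ u (Bbr G u v) + ε :=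
          le_trans (le_csSup (((Bbr G u v).toFinite.image _).bddAbove)
            ⟨z, hzB, rfl⟩) hM₁
        rw [hsum]
        linarith
    have hsup : sSup ((recvTime G hG w ρ σ u) '' Set.univ) ≤
        ρ + w u v + bTime G hG w ρ v (Bbr G v u) + ε := by
      refine csSup_le ?_ ?_
      · exact ⟨recvTime G hG w ρ σ u u, ⟨u, Set.mem_univ u, rfl⟩⟩
      · rintro x ⟨z, _, rfl⟩
        exact key z
    calc bTimeT G hG w ρ u ≤ sSup ((recvTime G hG w ρ σ u) '' Set.univ) :=
        csInf_le ⟨0, hbdd u Set.univ (Set.mem_univ u)⟩ ⟨σ, hvalid, rfl⟩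
      _ ≤ _ := hsup
  refine le_antisymm ?_ lower
  by_contra hcon
  push_neg at hcon
  have h2 := upper ((bTimeT G hG w ρ u -
    (ρ + w u v + bTime G hG w ρ v (Bbr G v u))) / 2) (by linarith)
  linarith


end Postal
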